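/- Let A be a centrohermitian matrix in M(m, m+1) and suppose the variables are restricted to z_0 = z and z_1 = conj(z). If I ⊆ {1,…,m+1} with |I| = m and Ī = {m+2−i : i ∈ I}, then conj(P_I(z, conj z)) = P_{Ī}(z, conj z). -/
import Mathlib


/-- The `n × n` exchange matrix: ones on the anti-diagonal, zeros elsewhere. -/
noncomputable def Jex (n : ℕ) : Matrix (Fin n) (Fin n) ℂ :=
  Matrix.of fun i j => if j = i.rev then 1 else 0

/-- The shifted unit matrix `I_s ∈ M(m, m+1)`, `s = 0` giving `[I_m 0]` and
`s = 1` giving `[0 I_m]`. -/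
noncomputable def shiftI (m : ℕ) (s : ℕ) : Matrix (Fin m) (Fin (m + 1)) ℂ :=
  Matrix.of fun i j => if (j : ℕ) = (i : ℕ) + s then 1 else 0

/-- The generalized characteristic polynomial `P_I(z_0, z_1)` of `A ∈ M(m, m+1)`,
restricted to the conjugate complex variables `z_0 = z`, `z_1 = conj z`:
the determinant of the `m × m` submatrix of `A + z·[I_m 0] + conj z·[0 I_m]`
formed by the columns selected by `cols`. -/
noncomputable def Pgc {m : ℕ} (A : Matrix (Fin m) (Fin (m + 1)) ℂ)
    (cols : Fin m → Fin (m + 1)) (z : ℂ) : ℂ :=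
  ((A + z • shiftI m 0 + (starRingEnd ℂ) z • shiftI m 1).submatrix id cols).det

/-- For `A ∈ M(m, m+1)` centrohermitian and `I ⊆ {1,…,m+1}` with `|I| = m`,
`conj (P_I(z, conj z)) = P_{Ī}(z, conj z)` where `Ī = {m+2−i : i ∈ I}`
(in 0-indexed form, `i ↦ (cols i.rev).rev`). -/
theorem stmt6 (m : ℕ) (A : Matrix (Fin m) (Fin (m + 1)) ℂ)
    (hA : A = Jex m * A.map (starRingEnd ℂ) * Jex (m + 1))
    (cols : Fin m → Fin (m + 1)) (hcols : StrictMono cols) (z : ℂ) :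
    (starRingEnd ℂ) (Pgc A cols z) = Pgc A (fun i => (cols i.rev).rev) z := by
  set M := A + z • shiftI m 0 + (starRingEnd ℂ) z • shiftI m 1 with hMdef
  have hA' : ∀ (i : Fin m) (j : Fin (m+1)),
      (starRingEnd ℂ) (A i j) = A i.rev j.rev := by
    intro i j
    have h := congrFun (congrFun hA i.rev) j.rev
    rw [h]
    simp [Jex, Matrix.mul_apply, Matrix.map_apply, Finset.sum_ite_eq, Finset.sum_ite_eq',
      Finset.mul_sum, Finset.sum_mul]
  have hM : ∀ (i : Fin m) (j : Fin (m+1)),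
      (starRingEnd ℂ) (M i j) = M i.rev j.rev := by
    intro i j
    have hi := i.isLt
    have hj := j.isLt
    have hi' : (i.rev : ℕ) = m - 1 - (i : ℕ) := by simp only [Fin.val_rev]; omega
    have hj' : (j.rev : ℕ) = m - (j : ℕ) := by simp only [Fin.val_rev]; omega
    simp only [hMdef, Matrix.add_apply, Matrix.smul_apply, shiftI, Matrix.of_apply,
      map_add, map_mul, smul_eq_mul, Complex.conj_conj, apply_ite (starRingEnd ℂ),
      map_one, map_zero]
    rw [← hA' i j]
    split_ifs <;> first | ring1 | omega
  have key : ((M.submatrix id cols).map (starRingEnd ℂ))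
      = (M.submatrix id (fun i => (cols i.rev).rev)).submatrix Fin.revPerm Fin.revPerm := by
    ext i k
    simp [Matrix.submatrix_apply, Matrix.map_apply, hM i (cols k)]
  unfold Pgc
  rw [← hMdef, RingHom.map_det, RingHom.mapMatrix_apply, key, Matrix.det_submatrix_equiv_self]
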